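/- In any algebra (P, ·, ∘) satisfying the laws a∘(b∘c) = (a∘b)∘c, (a∘b)·c = a·(b·c), a·(b∘c) = (a·b)∘(a·c), and a∘b = (a·b)∘a, the left distributive law a·(b·c) = (a·b)·(a·c) holds for all a, b, c. -/
import Mathlib


/-- In any algebra (P, ·, ∘) satisfying the laws Σ, the left distributive law holds. -/
theorem sigma_implies_left_distributive {P : Type*} (mul comp : P → P → P)
    (hassoc : ∀ a b c, comp a (comp b c) = comp (comp a b) c)
    (hmix : ∀ a b c, mul (comp a b) c = mul a (mul b c))
    (hdist : ∀ a b c, mul a (comp b c) = comp (mul a b) (mul a c))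
    (habs : ∀ a b, comp a b = comp (mul a b) a) :
    ∀ a b c, mul a (mul b c) = mul (mul a b) (mul a c) := by
  intro a b c
  rw [← hmix, habs, hmix]
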